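/- arXiv:1202.3553 — 3 statements merged into one kernel-verified Lean document; each statement's English description precedes it below -/
import Mathlib

section
/- Let r ≥ 2 be an integer and q = exp(iπ/r). For any integer a with 0 ≤ a ≤ r−1, one has {a}! · {r−1−a}! = (√−1)^{r−1} · r, where {k}! = {1}{2}⋯{k} with {j} = q^j − q^{−j} and {0}! = 1. -/
/-- `q^x = exp(xiπ/r)`. -/
noncomputable def qexp (r : ℕ) (x : ℂ) : ℂ := Complex.exp (x * Real.pi * Complex.I / r)

/-- `{x} = q^x - q^{-x}`. -/
noncomputable def qn (r : ℕ) (x : ℂ) : ℂ := qexp r x - qexp r (-x)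

/-- The quantum factorial `{k}! = {1}{2}⋯{k}`, with `{0}! = 1`. -/
noncomputable def qfact (r : ℕ) (k : ℕ) : ℂ := ∏ j ∈ Finset.range k, qn r ((j : ℂ) + 1)

lemma qexp_add (r : ℕ) (x y : ℂ) : qexp r (x + y) = qexp r x * qexp r y := by
  rw [qexp, qexp, qexp, ← Complex.exp_add]
  congr 1; ring

lemma qexp_nat_mul (r k : ℕ) (x : ℂ) : qexp r ((k : ℂ) * x) = qexp r x ^ k := by
  rw [qexp, qexp, ← Complex.exp_nat_mul]
  congr 1; ring

lemma qexp_self (r : ℕ) (hr : (r : ℂ) ≠ 0) : qexp r (r : ℂ) = -1 := by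
  rw [qexp]
  have h : (r : ℂ) * (Real.pi : ℂ) * Complex.I / r = (Real.pi : ℂ) * Complex.I := by
    field_simp
  rw [h, Complex.exp_pi_mul_I]

lemma qexp_neg_self (r : ℕ) (hr : (r : ℂ) ≠ 0) : qexp r (-(r : ℂ)) = -1 := by
  have h1 : qexp r (-(r : ℂ)) * qexp r (r : ℂ) = 1 := by
    rw [← qexp_add]; simp [qexp]
  rw [qexp_self r hr] at h1
  linear_combination -h1

lemma qn_sub (r : ℕ) (hr : (r : ℂ) ≠ 0) (x : ℂ) : qn r ((r : ℂ) - x) = qn r x := by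
  have h1 : qexp r ((r : ℂ) - x) = -qexp r (-x) := by
    rw [sub_eq_add_neg, qexp_add, qexp_self r hr]; ring
  have h2 : qexp r (-((r : ℂ) - x)) = -qexp r x := by
    have e : -((r : ℂ) - x) = -(r : ℂ) + x := by ring
    rw [e, qexp_add, qexp_neg_self r hr]; ring
  rw [qn, qn, h1, h2]; ring

lemma gaussC (n : ℕ) : (∑ j ∈ Finset.range n, ((j : ℂ) + 1)) * 2 = (n : ℂ) * ((n : ℂ) + 1) := by
  have hnat : (∑ j ∈ Finset.range n, (j + 1)) * 2 = n * (n + 1) := by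
    induction n with
    | zero => rfl
    | succ k ih => rw [Finset.sum_range_succ, add_mul, ih]; ring
  have h := congrArg (Nat.cast (R := ℂ)) hnat
  push_cast at h
  linear_combination h

lemma qfact_last (n : ℕ) : qfact (n + 1) n = Complex.I ^ n * ((n : ℂ) + 1) := by
  set r : ℕ := n + 1 with hr
  have hrC : (r : ℂ) ≠ 0 := Nat.cast_ne_zero.mpr (Nat.succ_ne_zero n)
  set μ : ℂ := Complex.exp (2 * Real.pi * Complex.I / r) with hμ
  have hμq : μ = qexp r 2 := by rw [hμ, qexp]
  have hprim : IsPrimitiveRoot μ (n + 1) :=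
    Complex.isPrimitiveRoot_exp _ (Nat.succ_ne_zero n)
  -- factor each qn
  have hfac : ∀ j : ℕ, qn r ((j : ℂ) + 1) =
      qexp r (-((j : ℂ) + 1)) * (μ ^ (j + 1) - 1) := by
    intro j
    have h2 : μ ^ (j + 1) = qexp r (2 * ((j : ℂ) + 1)) := by
      rw [hμq, ← qexp_nat_mul r (j + 1) 2]
      congr 1; push_cast; ring
    have h3 : qexp r (-((j : ℂ) + 1)) * qexp r (2 * ((j : ℂ) + 1)) =
        qexp r ((j : ℂ) + 1) := by
      rw [← qexp_add]; congr 1; ring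
    rw [qn, h2, mul_sub, h3, mul_one]
  have hsplit : qfact r n =
      (∏ j ∈ Finset.range n, qexp r (-((j : ℂ) + 1))) *
      (∏ j ∈ Finset.range n, (μ ^ (j + 1) - 1)) := by
    rw [qfact, ← Finset.prod_mul_distrib]
    exact Finset.prod_congr rfl fun j _ => hfac j
  -- first product
  have hgauss := gaussC n
  have hA : (∏ j ∈ Finset.range n, qexp r (-((j : ℂ) + 1))) = (-Complex.I) ^ n := by
    have h1 : (∏ j ∈ Finset.range n, qexp r (-((j : ℂ) + 1))) =
        Complex.exp (∑ j ∈ Finset.range n, (-((j : ℂ) + 1) * Real.pi * Complex.I / r)) := by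
      rw [Complex.exp_sum]
      exact Finset.prod_congr rfl fun j _ => rfl
    have h2 : (∑ j ∈ Finset.range n, (-((j : ℂ) + 1) * Real.pi * Complex.I / r)) =
        (n : ℂ) * ((↑(-(Real.pi / 2)) : ℂ) * Complex.I) := by
      rw [← Finset.sum_div, ← Finset.sum_mul, ← Finset.sum_mul, Finset.sum_neg_distrib]
      have hrn : (r : ℂ) = (n : ℂ) + 1 := by rw [hr]; push_cast; ring
      rw [hrn]
      push_cast
      have hne : (n : ℂ) + 1 ≠ 0 := by rw [← hrn]; exact hrC
      field_simp
      linear_combination -hgauss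
    rw [h1, h2, Complex.exp_nat_mul, Complex.exp_mul_I]
    congr 1
    rw [← Complex.ofReal_cos, ← Complex.ofReal_sin]
    simp [Real.cos_pi_div_two, Real.sin_pi_div_two]
  -- second product
  have hB : (∏ j ∈ Finset.range n, (μ ^ (j + 1) - 1)) = (-1 : ℂ) ^ n * ((n : ℂ) + 1) := by
    have := hprim.prod_pow_sub_one_eq_order
    have h4 : ((-1 : ℂ) ^ n) * ((-1 : ℂ) ^ n *
        ∏ j ∈ Finset.range n, (μ ^ (j + 1) - 1)) = ((-1 : ℂ) ^ n) * ((n : ℂ) + 1) := by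
      rw [this]
    rw [← mul_assoc, ← mul_pow] at h4
    simpa using h4
  rw [hsplit, hA, hB, ← mul_assoc, ← mul_pow]
  norm_num

/-- For `0 ≤ a ≤ r-1`, one has `{a}!·{r-1-a}! = (√-1)^{r-1}·r`. -/
theorem stmt2 (r : ℕ) (hr : 2 ≤ r) (a : ℕ) (ha : a ≤ r - 1) :
    qfact r a * qfact r (r - 1 - a) = Complex.I ^ (r - 1) * (r : ℂ) := by
  obtain ⟨n, rfl⟩ : ∃ n, r = n + 1 := ⟨r - 1, by omega⟩
  have hrC : ((n + 1 : ℕ) : ℂ) ≠ 0 := by exact_mod_cast Nat.succ_ne_zero n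
  have ha' : a ≤ n := by omega
  set m : ℕ := n + 1 - 1 - a with hm
  have hmn : a + m = n := by omega
  have key : qfact (n + 1) a * qfact (n + 1) m = qfact (n + 1) (a + m) := by
    rw [show qfact (n + 1) (a + m) = ∏ j ∈ Finset.range (a + m), qn (n + 1) ((j : ℂ) + 1)
      from rfl, Finset.prod_range_add]
    congr 1
    have hcongr : ∀ i ∈ Finset.range m,
        qn (n + 1) (((a + i : ℕ) : ℂ) + 1) = qn (n + 1) (((m - 1 - i : ℕ) : ℂ) + 1) := by
      intro i hi
      rw [Finset.mem_range] at hi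
      have e1 : ((m - 1 - i : ℕ) : ℂ) + 1 = ((m - i : ℕ) : ℂ) := by
        have h : m - 1 - i + 1 = m - i := by omega
        rw [← h]; push_cast; ring
      have e2 : ((a + i : ℕ) : ℂ) + 1 = ((n + 1 : ℕ) : ℂ) - ((m - i : ℕ) : ℂ) := by
        have h : (m - i) + (a + i + 1) = n + 1 := by omega
        have := congrArg (Nat.cast (R := ℂ)) h
        push_cast at this ⊢
        linear_combination this
      rw [e1, e2, qn_sub _ hrC]
    rw [Finset.prod_congr rfl hcongr,
      Finset.prod_range_reflect (fun j => qn (n + 1) ((j : ℂ) + 1)) m]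
    rfl
  rw [key, hmn, qfact_last]
  norm_num
end

section
/- Let r ≥ 3 be an odd integer and q = exp(iπ/r). Define the 6j-symbol value at all colors zero as T_r = (−1)^{r−1} Σ_{z=0}^{(r−1)/2} [ (r−1)/2 choose z ]_q · [ (r−1)/2 + z choose (r−1)/2 ]_q² · [ r−1−z choose (r−1)/2 ]_q, where [a choose b]_q = {a}!/({b}!{a−b}!). Then T_r = r² · Σ_{z=0}^{(r−1)/2} ( {z}! · {(r−1)/2 − z}! )^{−4}. -/
/-- The quantum binomial `[a choose b]_q = {a}!/({b}!{a-b}!)`. -/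
noncomputable def qbinN (r : ℕ) (a b : ℕ) : ℂ := qfact r a / (qfact r b * qfact r (a - b))

lemma qn_eq_sin (r : ℕ) (x : ℝ) :
    qn r x = 2 * Complex.I * Real.sin (x * Real.pi / r) := by
  have h : ∀ z : ℂ, 2 * Complex.I * Complex.sin z
      = Complex.exp (z * Complex.I) - Complex.exp (-z * Complex.I) := by
    intro z
    rw [Complex.sin]
    linear_combination (Complex.exp (-z*Complex.I) - Complex.exp (z*Complex.I)) * Complex.I_sq
  rw [qn, qexp, qexp, Complex.ofReal_sin, h]
  have h1 : ((x:ℂ)) * Real.pi * Complex.I / r = (((x * Real.pi / r : ℝ)):ℂ) * Complex.I := by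
    push_cast; ring
  have h2 : (-(x:ℂ)) * Real.pi * Complex.I / r = -(((x * Real.pi / r : ℝ)):ℂ) * Complex.I := by
    push_cast; ring
  rw [h1, h2]

lemma qn_ne_zero (r : ℕ) (j : ℕ) (h1 : 1 ≤ j) (h2 : j ≤ r - 1) (hr : 1 ≤ r) :
    qn r j ≠ 0 := by
  have : qn r (j:ℝ) ≠ 0 := by
    rw [qn_eq_sin]
    have hs : Real.sin ((j:ℝ) * Real.pi / r) ≠ 0 := by
      apply ne_of_gt
      apply Real.sin_pos_of_pos_of_lt_pi
      · positivity
      · rw [div_lt_iff₀ (by positivity)]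
        have : (j:ℝ) < r := by exact_mod_cast (by omega : j < r)
        nlinarith [Real.pi_pos]
    exact mul_ne_zero (mul_ne_zero two_ne_zero Complex.I_ne_zero)
      (by exact_mod_cast Complex.ofReal_ne_zero.mpr hs)
  simpa using this

lemma qn_symm (r : ℕ) (hr : (r:ℂ) ≠ 0) (x : ℂ) : qn r ((r:ℂ) - x) = qn r x := by
  have h1 : qexp r ((r:ℂ) - x) = -qexp r (-x) := by
    rw [qexp, qexp, show ((r:ℂ) - x) * Real.pi * Complex.I / r
      = Real.pi * Complex.I + (-x) * Real.pi * Complex.I / r by field_simp; ring,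
      Complex.exp_add, Complex.exp_pi_mul_I]
    ring
  have h2 : qexp r (-((r:ℂ) - x)) = -qexp r x := by
    rw [qexp, qexp, show (-((r:ℂ) - x)) * Real.pi * Complex.I / r
      = -(Real.pi * Complex.I) + x * Real.pi * Complex.I / r by field_simp; ring,
      Complex.exp_add, Complex.exp_neg, Complex.exp_pi_mul_I]
    field_simp
  rw [qn, qn, h1, h2]; ring

lemma qfact_pair (r : ℕ) (hr3 : 3 ≤ r) (a n : ℕ) (h : a + n = r - 1) :
    qfact r a * qfact r n = qfact r (r - 1) := by
  have hrc : (r:ℂ) ≠ 0 := Nat.cast_ne_zero.mpr (by omega)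
  have hran : r = a + n + 1 := by omega
  rw [show r - 1 = a + n from h.symm]
  simp only [qfact]
  rw [Finset.prod_range_add]
  congr 1
  have : ∀ j ∈ Finset.range n, qn r ((↑(a + j) : ℂ) + 1) = qn r ((↑(n - 1 - j) : ℂ) + 1) := by
    intro j hj
    rw [Finset.mem_range] at hj
    have hc1 : ((n - 1 - j : ℕ) : ℂ) = (n:ℂ) - 1 - j := by
      have e : n - 1 - j = n - (j+1) := by omega
      rw [e, Nat.cast_sub (by omega : j + 1 ≤ n)]
      push_cast; ring
    have hc2 : ((a + j : ℕ) : ℂ) + 1 = (r:ℂ) - ((n:ℂ) - 1 - j + 1) := by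
      have : (r:ℂ) = (a:ℂ) + n + 1 := by exact_mod_cast congrArg (Nat.cast : ℕ → ℂ) hran
      push_cast
      linear_combination -this
    rw [hc1, hc2, qn_symm r hrc]
  exact ((Finset.prod_congr rfl this).trans
    (Finset.prod_range_reflect (fun j => qn r ((j:ℂ) + 1)) n)).symm

lemma qfact_top (m : ℕ) (hm : 1 ≤ m) :
    qfact (2*m+1) (2*m) = (-1)^m * (2*m+1 : ℂ) := by
  set r := 2*m+1 with hr
  have hrc : (r:ℂ) ≠ 0 := Nat.cast_ne_zero.mpr (by omega)
  have key : ∀ x : ℂ, qn r x = -qexp r (-x) * (1 - qexp r (2*x)) := by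
    intro x
    have h := qexp_add r (-x) (2*x)
    rw [show -x + 2*x = x by ring] at h
    rw [qn]
    linear_combination h
  have hμ : IsPrimitiveRoot (Complex.exp (2 * Real.pi * Complex.I / r)) ((2*m) + 1) :=
    Complex.isPrimitiveRoot_exp r (by omega)
  have hprod2 : ∏ j ∈ Finset.range (2*m), (1 - qexp r (2*((j:ℂ)+1))) = (r:ℂ) := by
    have h2 := hμ.prod_one_sub_pow_eq_order
    have he : ∀ j ∈ Finset.range (2*m),
        (1 - qexp r (2*((j:ℂ)+1))) = (1 - Complex.exp (2 * Real.pi * Complex.I / r) ^ (j+1)) := by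
      intro j _
      rw [qexp, ← Complex.exp_nat_mul]
      congr 2
      push_cast; ring
    rw [Finset.prod_congr rfl he, h2]
    push_cast [hr]; ring
  have hsum : (∑ j ∈ Finset.range (2*m), (j+1)) = m * r := by
    have h1 := Finset.sum_range_id_mul_two (2*m+1)
    have h2 : ∑ i ∈ Finset.range (2*m+1), i = (∑ j ∈ Finset.range (2*m), (j+1)) + 0 :=
      Finset.sum_range_succ' id (2*m)
    simp only [add_zero] at h2
    rw [h2] at h1
    apply Nat.eq_of_mul_eq_mul_right (by norm_num : 0 < 2)
    rw [h1, hr]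
    have e : (2*m+1) - 1 = 2*m := by omega
    rw [e]; ring
  have hprod1 : ∏ j ∈ Finset.range (2*m), (-qexp r (-((j:ℂ)+1))) = (-1)^m := by
    have : ∀ j ∈ Finset.range (2*m),
        (-qexp r (-((j:ℂ)+1))) = (-1) * Complex.exp (-(((j:ℂ)+1)) * (Real.pi * Complex.I / r)) := by
      intro j _
      rw [qexp]; ring
    rw [Finset.prod_congr rfl this, Finset.prod_mul_distrib, Finset.prod_const,
      Finset.card_range, ← Complex.exp_sum]
    have hcast : ∑ j ∈ Finset.range (2*m), (-(((j:ℂ)+1)) * (Real.pi * Complex.I / r))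
        = -((m:ℂ) * (Real.pi * Complex.I)) := by
      rw [← Finset.sum_mul]
      have hc := congrArg (Nat.cast : ℕ → ℂ) hsum
      push_cast at hc
      have : ∑ j ∈ Finset.range (2*m), (-((j:ℂ)+1)) = -((m:ℂ) * r) := by
        rw [Finset.sum_neg_distrib, hc, hr]
      rw [this]
      field_simp
    rw [hcast]
    have : Complex.exp (-((m:ℂ) * (Real.pi * Complex.I))) = ((-1:ℂ)^m)⁻¹ := by
      rw [Complex.exp_neg, Complex.exp_nat_mul, Complex.exp_pi_mul_I]
    rw [this]
    have h4 : ((-1:ℂ)^m)⁻¹ = (-1)^m := by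
      rw [← inv_pow]; norm_num
    rw [h4, pow_mul]
    norm_num
  rw [qfact]
  have hterm : ∀ j ∈ Finset.range (2*m),
      qn r ((j:ℂ)+1) = (-qexp r (-((j:ℂ)+1))) * (1 - qexp r (2*((j:ℂ)+1))) :=
    fun j _ => key _
  rw [Finset.prod_congr rfl hterm, Finset.prod_mul_distrib, hprod1, hprod2]
  push_cast [hr]; ring

/-- For odd `r`, the all-zero-colors `6j`-symbol
`T_r = (-1)^{r-1} Σ_z [m choose z][m+z choose m]²[r-1-z choose m]` (with `m = (r-1)/2`)
equals `r² Σ_z ({z}!{m-z}!)^{-4}`. -/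
theorem stmt9 (r : ℕ) (hr : 3 ≤ r) (hodd : Odd r) :
    (-1 : ℂ) ^ (r - 1) *
        ∑ z ∈ Finset.range ((r - 1) / 2 + 1),
          qbinN r ((r - 1) / 2) z * (qbinN r ((r - 1) / 2 + z) ((r - 1) / 2)) ^ 2 *
            qbinN r (r - 1 - z) ((r - 1) / 2) =
      (r : ℂ) ^ 2 *
        ∑ z ∈ Finset.range ((r - 1) / 2 + 1),
          ((qfact r z * qfact r ((r - 1) / 2 - z)) ^ 4)⁻¹ := by
  obtain ⟨m, hm⟩ := hodd
  have hm1 : 1 ≤ m := by omega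
  have e1 : r - 1 = 2 * m := by omega
  have e2 : (r - 1) / 2 = m := by omega
  rw [e2, e1]
  have hqfne : ∀ k, k ≤ 2*m → qfact r k ≠ 0 := by
    intro k hk
    rw [qfact]
    apply Finset.prod_ne_zero_iff.mpr
    intro j hj
    rw [Finset.mem_range] at hj
    have hc : ((j:ℂ)+1) = ((j+1 : ℕ):ℂ) := by push_cast; ring
    rw [hc]
    exact qn_ne_zero r (j+1) (by omega) (by omega) (by omega)
  have hC : qfact r (r - 1) = (-1)^m * (r:ℂ) := by
    rw [e1, hm]
    have := qfact_top m hm1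
    rw [this]
    push_cast [hm]
    ring
  have hpow : ((-1:ℂ)) ^ (2*m) = 1 := by
    rw [pow_mul]; norm_num
  rw [hpow, one_mul, Finset.mul_sum]
  apply Finset.sum_congr rfl
  intro z hz
  rw [Finset.mem_range] at hz
  have hzm : z ≤ m := by omega
  -- abbreviations
  have hcc : qfact r m * qfact r m = qfact r (r - 1) :=
    qfact_pair r hr m m (by omega)
  have hdb : qfact r (m+z) * qfact r (m-z) = qfact r (r - 1) :=
    qfact_pair r hr (m+z) (m-z) (by omega)
  have hea : qfact r (2*m-z) * qfact r z = qfact r (r - 1) :=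
    qfact_pair r hr (2*m-z) z (by omega)
  have ha : qfact r z ≠ 0 := hqfne z (by omega)
  have hb : qfact r (m-z) ≠ 0 := hqfne (m-z) (by omega)
  have hc : qfact r m ≠ 0 := hqfne m (by omega)
  have hd : qfact r (m+z) = qfact r m ^ 2 / qfact r (m-z) := by
    rw [eq_div_iff hb, sq]
    exact hdb.trans hcc.symm
  have he : qfact r (2*m-z) = qfact r m ^ 2 / qfact r z := by
    rw [eq_div_iff ha, sq]
    exact hea.trans hcc.symm
  have hr2 : (r:ℂ)^2 = qfact r m ^ 4 := by
    have h1 : qfact r m ^ 4 = (qfact r m * qfact r m)^2 := by ring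
    rw [h1, hcc, hC, mul_pow, ← pow_mul, mul_comm m 2, pow_mul]
    norm_num
  have hsub1 : m + z - m = z := by omega
  have hsub2 : 2*m - z - m = m - z := by omega
  rw [qbinN, qbinN, qbinN, hsub1, hsub2, hd, he, hr2]
  field_simp
end

section
/- Let Λ(x) = −∫₀ˣ log|2 sin t| dt be the Lobachevsky function. Then lim_{r→∞, r odd} (2π/r)·log( Σ_{z=0}^{(r−1)/2} ({z}!·{(r−1)/2−z}!)^{−4} ) = 16·Λ(π/4), where {j} = 2 sin(jπ/r) (taking absolute values) and {k}! = ∏_{j=1}^k {j}. -/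
open Real Filter

/-- The Lobachevsky function `Λ(x) = -∫₀ˣ log|2 sin t| dt`. -/
noncomputable def lob (x : ℝ) : ℝ := -∫ t in (0 : ℝ)..x, Real.log |2 * Real.sin t|

/-- `{k}! = ∏_{j=1}^k 2 sin(jπ/r)` (real, positive version of the quantum factorial). -/
noncomputable def qfactR (r : ℕ) (k : ℕ) : ℝ :=
  ∏ j ∈ Finset.range k, 2 * Real.sin (((j : ℝ) + 1) * Real.pi / r)

/-- The sum `Σ_{z=0}^{(r-1)/2} ({z}!·{(r-1)/2-z}!)^{-4}`. -/
noncomputable def growthSum (r : ℕ) : ℝ :=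
  ∑ z ∈ Finset.range ((r - 1) / 2 + 1),
    ((qfactR r z * qfactR r ((r - 1) / 2 - z)) ^ 4)⁻¹

section Aux

open MeasureTheory Set intervalIntegral

noncomputable def flob (t : ℝ) : ℝ := Real.log |2 * Real.sin t|

lemma flob_eq (t : ℝ) : flob t = Real.log (2 * Real.sin t) := Real.log_abs _

lemma flob_mono {s t : ℝ} (hs : 0 < s) (hst : s ≤ t) (ht : t ≤ Real.pi / 2) :
    flob s ≤ flob t := by
  rw [flob_eq, flob_eq]
  have h1 : Real.sin s ≤ Real.sin t :=
    Real.sin_le_sin_of_le_of_le_pi_div_two (by linarith [Real.pi_pos]) ht hst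
  have h2 : 0 < Real.sin s := Real.sin_pos_of_pos_of_lt_pi hs (by linarith [Real.pi_pos])
  exact Real.log_le_log (by linarith) (by linarith)

lemma neg_log_le (t : ℝ) (ht : 0 < t) : -Real.log t ≤ 2 * t ^ (-(1/2) : ℝ) := by
  have h1 : Real.log (t ^ (-(1/2) : ℝ)) = -(1/2) * Real.log t := Real.log_rpow ht _
  have h2 : Real.log (t ^ (-(1/2) : ℝ)) ≤ t ^ (-(1/2) : ℝ) - 1 :=
    Real.log_le_sub_one_of_pos (Real.rpow_pos_of_pos ht _)
  nlinarith [Real.rpow_pos_of_pos ht (-(1/2) : ℝ)]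

lemma flob_integrableOn : IntegrableOn flob (Icc 0 (Real.pi / 2)) := by
  rw [integrableOn_Icc_iff_integrableOn_Ioc]
  have hpi : (0:ℝ) ≤ Real.pi / 2 := by positivity
  have hg : IntegrableOn (fun t : ℝ => Real.log 2 + 2 * t ^ (-(1/2) : ℝ)) (Ioc 0 (Real.pi/2)) := by
    apply Integrable.add
    · exact integrableOn_const measure_Ioc_lt_top.ne
    · have := (intervalIntegrable_rpow' (a := 0) (b := Real.pi/2) (r := -(1/2)) (by norm_num)).1
      exact this.const_mul 2
  refine MeasureTheory.Integrable.mono hg ?_ ?_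
  · exact ((Real.measurable_log.comp ((measurable_sin.const_mul 2).abs)).aestronglyMeasurable)
  · rw [ae_restrict_iff' measurableSet_Ioc]
    filter_upwards with t ht
    obtain ⟨ht0, ht2⟩ := ht
    have hsin : 0 < Real.sin t := Real.sin_pos_of_pos_of_lt_pi ht0 (by linarith [Real.pi_pos])
    have hub : flob t ≤ Real.log 2 := by
      rw [flob_eq]
      have : 2 * Real.sin t ≤ 2 := by nlinarith [Real.sin_le_one t]
      exact Real.log_le_log (by linarith) this
    have hlb : Real.log t ≤ flob t := by
      rw [flob_eq]
      have h1 : t ≤ 2 * Real.sin t := by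
        have hs := Real.mul_le_sin (le_of_lt ht0) ht2
        have hπ4 : Real.pi ≤ 4 := by linarith [Real.pi_lt_d2]
        have h5 : (1:ℝ)/2 ≤ 2 / Real.pi := by
          rw [div_le_div_iff₀ (by norm_num) Real.pi_pos]; linarith
        nlinarith
      exact Real.log_le_log ht0 h1
    have hrp : (0:ℝ) < t ^ (-(1/2) : ℝ) := Real.rpow_pos_of_pos ht0 _
    have hn := neg_log_le t ht0
    rw [Real.norm_eq_abs, Real.norm_eq_abs, abs_of_nonneg (by positivity : (0:ℝ) ≤ Real.log 2 + 2 * t ^ (-(1/2):ℝ))]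
    rw [abs_le]
    constructor
    · have : (0:ℝ) ≤ Real.log 2 := Real.log_nonneg (by norm_num)
      linarith
    · have : (0:ℝ) ≤ Real.log 2 := Real.log_nonneg (by norm_num)
      linarith

lemma flob_ii {a b : ℝ} (ha : 0 ≤ a) (hab : a ≤ b) (hb : b ≤ Real.pi / 2) :
    IntervalIntegrable flob volume a b := by
  rw [intervalIntegrable_iff_integrableOn_Icc_of_le hab]
  exact flob_integrableOn.mono_set (Icc_subset_Icc ha hb)

lemma step_le {a b : ℝ} (ha : 0 ≤ a) (hab : a ≤ b) (hb : b ≤ Real.pi / 2) :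
    (∫ t in a..b, flob t) ≤ (b - a) * flob b := by
  rw [integral_of_le hab]
  have h1 : ∫ t in Ioc a b, flob t ≤ ∫ _t in Ioc a b, flob b := by
    apply setIntegral_mono_on
    · exact ((flob_ii ha hab hb).1).mono_set (by simp [Ioc_subset_Ioc_left, le_refl])
    · exact integrableOn_const measure_Ioc_lt_top.ne
    · exact measurableSet_Ioc
    · intro t ht
      exact flob_mono (lt_of_le_of_lt ha ht.1) ht.2 hb
  calc (∫ t in Ioc a b, flob t) ≤ ∫ _t in Ioc a b, flob b := h1
    _ = (b - a) * flob b := by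
        rw [setIntegral_const, measureReal_def, Real.volume_Ioc, ENNReal.toReal_ofReal (by linarith)]
        simp [smul_eq_mul, sub_mul]

lemma step_ge {a b : ℝ} (ha : 0 < a) (hab : a ≤ b) (hb : b ≤ Real.pi / 2) :
    (b - a) * flob a ≤ ∫ t in a..b, flob t := by
  rw [integral_of_le hab]
  have h1 : ∫ _t in Ioc a b, flob a ≤ ∫ t in Ioc a b, flob t := by
    apply setIntegral_mono_on
    · exact integrableOn_const measure_Ioc_lt_top.ne
    · exact ((flob_ii ha.le hab hb).1).mono_set (by simp [Ioc_subset_Ioc_left, le_refl])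
    · exact measurableSet_Ioc
    · intro t ht
      exact flob_mono ha ht.1.le (ht.2.trans hb)
  calc (b - a) * flob a = ∫ _t in Ioc a b, flob a := by
        rw [setIntegral_const, measureReal_def, Real.volume_Ioc, ENNReal.toReal_ofReal (by linarith)]
        simp [smul_eq_mul, sub_mul]
    _ ≤ _ := h1

noncomputable def Lsum (r : ℕ) (z : ℕ) : ℝ :=
  ∑ j ∈ Finset.range z, flob (((j : ℝ) + 1) * Real.pi / r)

lemma sum_ge_integral {r z : ℕ} (hr : 0 < r) (hz : (z : ℝ) * Real.pi / r ≤ Real.pi / 2) :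
    (∫ t in (0:ℝ)..((z : ℝ) * Real.pi / r), flob t) ≤ (Real.pi / r) * Lsum r z := by
  have hrpos : (0:ℝ) < r := by exact_mod_cast hr
  have hπ := Real.pi_pos
  induction z with
  | zero => simp [Lsum]
  | succ z ih =>
    have hz' : (z : ℝ) * Real.pi / r ≤ Real.pi / 2 := by
      apply le_trans _ hz
      apply div_le_div_of_nonneg_right _ hrpos.le
      push_cast; nlinarith
    have hc : ((z + 1 : ℕ) : ℝ) = (z : ℝ) + 1 := by push_cast; ring
    rw [hc] at hz ⊢
    have h0z : (0:ℝ) ≤ (z : ℝ) * Real.pi / r := by positivity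
    have hzz1 : (z : ℝ) * Real.pi / r ≤ ((z : ℝ) + 1) * Real.pi / r := by
      apply div_le_div_of_nonneg_right _ hrpos.le; nlinarith
    have hsplit : (∫ t in (0:ℝ)..(((z:ℝ)+1) * Real.pi / r), flob t)
        = (∫ t in (0:ℝ)..((z:ℝ) * Real.pi / r), flob t)
          + ∫ t in ((z:ℝ) * Real.pi / r)..(((z:ℝ)+1) * Real.pi / r), flob t := by
      rw [integral_add_adjacent_intervals (flob_ii le_rfl h0z hz') (flob_ii h0z hzz1 hz)]
    have hstep := step_le h0z hzz1 hz
    have harith : ((z:ℝ)+1) * Real.pi / r - (z:ℝ) * Real.pi / r = Real.pi / r := by ring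
    rw [harith] at hstep
    have hLs : Lsum r (z+1) = Lsum r z + flob (((z:ℝ)+1) * Real.pi / r) := by
      rw [Lsum, Finset.sum_range_succ]; rfl
    rw [hsplit, hLs]
    have := ih hz'
    linarith
lemma sum_le_integral {r z : ℕ} (hr : 0 < r) (hz : ((z : ℝ) + 1) * Real.pi / r ≤ Real.pi / 2) :
    (Real.pi / r) * Lsum r z ≤ ∫ t in (Real.pi / r)..(((z : ℝ) + 1) * Real.pi / r), flob t := by
  have hrpos : (0:ℝ) < r := by exact_mod_cast hr
  have hπ := Real.pi_pos
  induction z with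
  | zero => simp [Lsum]
  | succ z ih =>
    push_cast at hz ⊢
    have hz' : ((z:ℝ) + 1) * Real.pi / r ≤ Real.pi / 2 := by
      apply le_trans _ hz
      apply div_le_div_of_nonneg_right _ hrpos.le; nlinarith
    have hhle : Real.pi / r ≤ ((z:ℝ)+1) * Real.pi / r := by
      rw [div_le_div_iff₀ hrpos hrpos]; nlinarith [mul_nonneg (mul_nonneg (Nat.cast_nonneg (α := ℝ) z) hπ.le) hrpos.le]
    have h1pos : (0:ℝ) < ((z:ℝ)+1) * Real.pi / r := by positivity
    have hle2 : ((z:ℝ)+1) * Real.pi / r ≤ ((z:ℝ)+1+1) * Real.pi / r := by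
      apply div_le_div_of_nonneg_right _ hrpos.le; nlinarith
    have hsplit : (∫ t in (Real.pi/r)..(((z:ℝ)+1+1) * Real.pi / r), flob t)
        = (∫ t in (Real.pi/r)..(((z:ℝ)+1) * Real.pi / r), flob t)
          + ∫ t in (((z:ℝ)+1) * Real.pi / r)..(((z:ℝ)+1+1) * Real.pi / r), flob t := by
      rw [integral_add_adjacent_intervals
        (flob_ii (by positivity) hhle hz') (flob_ii h1pos.le hle2 hz)]
    have hstep := step_ge h1pos hle2 hz
    have harith : ((z:ℝ)+1+1) * Real.pi / r - ((z:ℝ)+1) * Real.pi / r = Real.pi / r := by ring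
    rw [harith] at hstep
    have hLs : Lsum r (z+1) = Lsum r z + flob (((z:ℝ)+1) * Real.pi / r) := by
      rw [Lsum, Finset.sum_range_succ]; rfl
    rw [hsplit, hLs]
    have := ih hz'
    linarith

lemma lob_eq (x : ℝ) : lob x = -∫ t in (0:ℝ)..x, flob t := rfl

lemma lob_zero : lob 0 = 0 := by simp [lob]

lemma lob_continuousOn : ContinuousOn lob (Icc 0 (Real.pi / 2)) := by
  have h : uIcc (0:ℝ) (Real.pi/2) = Icc 0 (Real.pi/2) :=
    uIcc_of_le (by positivity)
  have := continuousOn_primitive_interval (a := (0:ℝ)) (b := Real.pi/2)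
    (f := flob) (μ := volume) (by rw [h]; exact flob_integrableOn)
  rw [h] at this
  exact this.neg

lemma lob_tendsto {a : ℕ → ℝ} {L : ℝ} (hL : L ∈ Icc (0:ℝ) (Real.pi/2))
    (ha : Tendsto a atTop (nhds L)) (hmem : ∀ᶠ r in atTop, a r ∈ Icc (0:ℝ) (Real.pi/2)) :
    Tendsto (fun r => lob (a r)) atTop (nhds (lob L)) := by
  have h1 : Tendsto a atTop (nhdsWithin L (Icc 0 (Real.pi/2))) :=
    tendsto_nhdsWithin_iff.mpr ⟨ha, hmem⟩
  exact (lob_continuousOn L hL).tendsto.comp h1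

/-- limit of g r * d / r given |g r - c*r| ≤ A eventually -/
lemma tendsto_nat_div {g : ℕ → ℕ} {c A d : ℝ}
    (h : ∀ᶠ r : ℕ in atTop, |(g r : ℝ) - c * r| ≤ A) :
    Tendsto (fun r : ℕ => (g r : ℝ) * d / r) atTop (nhds (c * d)) := by
  have h0 : Tendsto (fun r : ℕ => c * d + (A * |d|) / r) atTop (nhds (c * d)) := by
    simpa using tendsto_const_nhds.add (tendsto_const_div_atTop_nhds_zero_nat (A * |d|))
  have h0' : Tendsto (fun r : ℕ => c * d - (A * |d|) / r) atTop (nhds (c * d)) := by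
    simpa using tendsto_const_nhds.sub (tendsto_const_div_atTop_nhds_zero_nat (A * |d|))
  apply tendsto_of_tendsto_of_tendsto_of_le_of_le' h0' h0
  · filter_upwards [h, eventually_gt_atTop 0] with r hr hrpos
    have hrp : (0:ℝ) < r := by exact_mod_cast hrpos
    have key : |(g r : ℝ) * d - c * r * d| ≤ A * |d| := by
      have : (g r : ℝ) * d - c * r * d = ((g r : ℝ) - c * r) * d := by ring
      rw [this, abs_mul]
      exact mul_le_mul_of_nonneg_right hr (abs_nonneg d)
    obtain ⟨k1, k2⟩ := abs_le.mp key
    have e1 : c * d - A * |d| / (r:ℝ) = (c * r * d - A * |d|) / r := by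
      field_simp
    rw [e1]
    exact div_le_div_of_nonneg_right (by linarith) hrp.le
  · filter_upwards [h, eventually_gt_atTop 0] with r hr hrpos
    have hrp : (0:ℝ) < r := by exact_mod_cast hrpos
    have key : |(g r : ℝ) * d - c * r * d| ≤ A * |d| := by
      have : (g r : ℝ) * d - c * r * d = ((g r : ℝ) - c * r) * d := by ring
      rw [this, abs_mul]
      exact mul_le_mul_of_nonneg_right hr (abs_nonneg d)
    obtain ⟨k1, k2⟩ := abs_le.mp key
    have e1 : c * d + A * |d| / (r:ℝ) = (c * r * d + A * |d|) / r := by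
      field_simp
    rw [e1]
    exact div_le_div_of_nonneg_right (by linarith) hrp.le

lemma lob_eq' (x : ℝ) : lob x = -∫ t in (0:ℝ)..x, flob t := rfl

lemma lob_midpoint {x y : ℝ} (hx : 0 ≤ x) (hxy : x ≤ y) (hy : y ≤ Real.pi / 2) :
    lob x + lob y ≤ 2 * lob ((x + y) / 2) := by
  rcases eq_or_lt_of_le (hx.trans hxy) with hy0 | hy0
  · have hx0 : x = 0 := le_antisymm (hxy.trans hy0.symm.le) hx
    rw [hx0, ← hy0]; norm_num; linarith [le_refl (lob 0)]
  have hm : 0 < (x + y) / 2 := by linarith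
  have hxm : x ≤ (x + y) / 2 := by linarith
  have hmy : (x + y) / 2 ≤ y := by linarith
  have hmhalf : (x + y) / 2 ≤ Real.pi / 2 := hmy.trans hy
  have hi1 : (∫ t in x..((x+y)/2), flob t)
      = (∫ t in (0:ℝ)..((x+y)/2), flob t) - ∫ t in (0:ℝ)..x, flob t :=
    (integral_interval_sub_left (flob_ii le_rfl (by linarith) hmhalf)
      (flob_ii le_rfl hx (by linarith))).symm
  have hi2 : (∫ t in ((x+y)/2)..y, flob t)
      = (∫ t in (0:ℝ)..y, flob t) - ∫ t in (0:ℝ)..((x+y)/2), flob t :=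
    (integral_interval_sub_left (flob_ii le_rfl (by linarith) hy)
      (flob_ii le_rfl (by linarith) hmhalf)).symm
  have h1 := step_le hx hxm hmhalf
  have h2 := step_ge hm hmy hy
  rw [hi1] at h1
  rw [hi2] at h2
  rw [lob_eq', lob_eq', lob_eq']
  have harith : ((x+y)/2 - x) = (y - (x+y)/2) := by ring
  rw [harith] at h1
  linarith

lemma qfactR_pos {r z : ℕ} (hz : z < r) : 0 < qfactR r z := by
  have hπ := Real.pi_pos
  apply Finset.prod_pos
  intro j hj
  rw [Finset.mem_range] at hj
  have hj1 : (j:ℝ) + 1 ≤ (z:ℝ) := by exact_mod_cast Nat.succ_le_of_lt hj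
  have hzr : (z:ℝ) < (r:ℝ) := by exact_mod_cast hz
  have hrpos : (0:ℝ) < r := lt_of_le_of_lt (by positivity) hzr
  have h0 : 0 < ((j:ℝ) + 1) * Real.pi / r := by positivity
  have h1 : ((j:ℝ) + 1) * Real.pi / r < Real.pi := by
    rw [div_lt_iff₀ hrpos]; nlinarith
  have := Real.sin_pos_of_pos_of_lt_pi h0 h1
  linarith

lemma log_qfactR {r z : ℕ} (hz : z < r) : Real.log (qfactR r z) = Lsum r z := by
  have hπ := Real.pi_pos
  rw [qfactR, Real.log_prod, Lsum]
  · apply Finset.sum_congr rfl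
    intro j _
    rw [flob_eq]
  · intro j hj
    rw [Finset.mem_range] at hj
    have hj1 : (j:ℝ) + 1 ≤ (z:ℝ) := by exact_mod_cast Nat.succ_le_of_lt hj
    have hzr : (z:ℝ) < (r:ℝ) := by exact_mod_cast hz
    have hrpos : (0:ℝ) < r := lt_of_le_of_lt (by positivity) hzr
    have h0 : 0 < ((j:ℝ) + 1) * Real.pi / r := by positivity
    have h1 : ((j:ℝ) + 1) * Real.pi / r < Real.pi := by
      rw [div_lt_iff₀ hrpos]; nlinarith
    have := Real.sin_pos_of_pos_of_lt_pi h0 h1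
    positivity

noncomputable def lowB (r : ℕ) : ℝ :=
  8 * (lob ((((r-1)/2/2 : ℕ) : ℝ) * Real.pi / r + Real.pi / r)
     + lob ((((r-1)/2 - (r-1)/2/2 : ℕ) : ℝ) * Real.pi / r + Real.pi / r)
     - 2 * lob (Real.pi / r))

noncomputable def upB (r : ℕ) : ℝ :=
  2 * Real.pi / r * Real.log ((((r-1)/2 : ℕ) : ℝ) + 1)
  + 16 * lob ((((r-1)/2 : ℕ) : ℝ) * Real.pi / (2 * r))

lemma main_bounds {r : ℕ} (hodd : Odd r) (hr5 : 5 ≤ r) :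
    lowB r ≤ (2 * Real.pi / r) * Real.log (growthSum r) ∧
    (2 * Real.pi / r) * Real.log (growthSum r) ≤ upB r := by
  have hπ := Real.pi_pos
  obtain ⟨k, hk⟩ := hodd
  set n : ℕ := (r-1)/2 with hn
  have hnk : n = k := by omega
  have hreq : r = 2*n + 1 := by omega
  have hn2 : 2 ≤ n := by omega
  have hrpos : (0:ℝ) < r := by positivity
  have hrne : (r:ℝ) ≠ 0 := hrpos.ne'
  -- basic bounds
  have hzlt : ∀ z : ℕ, z ≤ n → z < r := by omega
  have hterm_pos : ∀ z : ℕ, z ≤ n → 0 < ((qfactR r z * qfactR r (n - z)) ^ 4)⁻¹ := by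
    intro z hz
    have h1 := qfactR_pos (hzlt z hz)
    have h2 := qfactR_pos (hzlt (n - z) (Nat.sub_le n z))
    positivity
  have hgs_pos : 0 < growthSum r := by
    rw [growthSum]
    apply Finset.sum_pos
    · intro z hz
      exact hterm_pos z (by rw [Finset.mem_range] at hz; omega)
    · exact ⟨0, Finset.mem_range.mpr (Nat.succ_pos n)⟩
  -- log of a term
  have hlog_term : ∀ z : ℕ, z ≤ n →
      Real.log (((qfactR r z * qfactR r (n - z)) ^ 4)⁻¹)
        = -(4 * (Lsum r z + Lsum r (n - z))) := by
    intro z hz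
    have h1 := qfactR_pos (hzlt z hz)
    have h2 := qfactR_pos (hzlt (n - z) (Nat.sub_le n z))
    rw [Real.log_inv, Real.log_pow, Real.log_mul h1.ne' h2.ne',
      log_qfactR (hzlt z hz), log_qfactR (hzlt (n - z) (Nat.sub_le n z))]
    push_cast; ring
  -- Riemann sum upper bound for -(π/r) * Lsum
  have hA : ∀ z : ℕ, z ≤ n → -(Real.pi / r) * Lsum r z ≤ lob ((z:ℝ) * Real.pi / r) := by
    intro z hz
    have hcond : (z:ℝ) * Real.pi / r ≤ Real.pi / 2 := by
      rw [div_le_div_iff₀ hrpos (by norm_num)]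
      have : (2:ℝ) * z ≤ r := by exact_mod_cast (by omega : 2 * z ≤ r)
      nlinarith
    have := sum_ge_integral (by omega : 0 < r) hcond
    rw [lob_eq']
    linarith
  -- midpoint bound
  have hM : ∀ z : ℕ, z ≤ n →
      lob ((z:ℝ) * Real.pi / r) + lob ((((n - z : ℕ)):ℝ) * Real.pi / r)
        ≤ 2 * lob ((n:ℝ) * Real.pi / (2 * r)) := by
    intro z hz
    have hcast : (((n - z : ℕ)):ℝ) = (n:ℝ) - (z:ℝ) := by
      rw [Nat.cast_sub hz]
    have hmid : (((z:ℝ) * Real.pi / r) + (((n:ℝ) - (z:ℝ)) * Real.pi / r)) / 2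
        = (n:ℝ) * Real.pi / (2 * r) := by field_simp; ring
    have hzn : (z:ℝ) ≤ (n:ℝ) := by exact_mod_cast hz
    have hz0 : (0:ℝ) ≤ (z:ℝ) := Nat.cast_nonneg z
    have hn0 : (0:ℝ) ≤ (n:ℝ) - (z:ℝ) := by linarith
    have h2n : (2:ℝ) * n ≤ r := by exact_mod_cast (by omega : 2 * n ≤ r)
    have hhalf : ∀ w : ℝ, 0 ≤ w → w ≤ (n:ℝ) → w * Real.pi / r ≤ Real.pi / 2 := by
      intro w hw0 hwn
      rw [div_le_div_iff₀ hrpos (by norm_num)]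
      nlinarith
    rcases le_total ((z:ℝ) * Real.pi / r) (((n:ℝ) - (z:ℝ)) * Real.pi / r) with hle | hle
    · have := lob_midpoint (by positivity) hle (hhalf _ hn0 (by linarith))
      rw [hmid] at this
      rw [hcast]; linarith
    · have := lob_midpoint (by positivity) hle (hhalf _ hz0 hzn)
      have hmid' : ((((n:ℝ) - (z:ℝ)) * Real.pi / r) + ((z:ℝ) * Real.pi / r)) / 2
          = (n:ℝ) * Real.pi / (2 * r) := by field_simp; ring
      rw [hmid'] at this
      rw [hcast]; linarith
  -- upper bound
  have hup : (2 * Real.pi / r) * Real.log (growthSum r) ≤ upB r := by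
    set M : ℝ := Real.exp (8 * ((r:ℝ) / Real.pi) * lob ((n:ℝ) * Real.pi / (2 * r))) with hM'
    have hterm_le : ∀ z ∈ Finset.range (n + 1),
        ((qfactR r z * qfactR r (n - z)) ^ 4)⁻¹ ≤ M := by
      intro z hzz
      rw [Finset.mem_range] at hzz
      have hz : z ≤ n := by omega
      have hpos := hterm_pos z hz
      rw [← Real.exp_log hpos, hlog_term z hz]
      apply Real.exp_le_exp.mpr
      have a1 := hA z hz
      have a2 := hA (n - z) (Nat.sub_le n z)
      have m1 := hM z hz
      have key : -(Real.pi / r) * (Lsum r z + Lsum r (n - z))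
          ≤ 2 * lob ((n:ℝ) * Real.pi / (2 * r)) := by linarith
      have := mul_le_mul_of_nonneg_left key (by positivity : (0:ℝ) ≤ 4 * ((r:ℝ) / Real.pi))
      calc -(4 * (Lsum r z + Lsum r (n - z)))
          = 4 * ((r:ℝ) / Real.pi) * (-(Real.pi / r) * (Lsum r z + Lsum r (n - z))) := by
            field_simp
        _ ≤ 4 * ((r:ℝ) / Real.pi) * (2 * lob ((n:ℝ) * Real.pi / (2 * r))) := this
        _ = 8 * ((r:ℝ) / Real.pi) * lob ((n:ℝ) * Real.pi / (2 * r)) := by ring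
    have hsum_le : growthSum r ≤ ((n:ℝ) + 1) * M := by
      rw [growthSum, ← hn]
      calc ∑ z ∈ Finset.range (n + 1), ((qfactR r z * qfactR r (n - z)) ^ 4)⁻¹
          ≤ ∑ _z ∈ Finset.range (n + 1), M := Finset.sum_le_sum hterm_le
        _ = ((n:ℝ) + 1) * M := by
            rw [Finset.sum_const, Finset.card_range]; push_cast; ring
    have hlog_le : Real.log (growthSum r) ≤ Real.log ((n:ℝ) + 1)
        + 8 * ((r:ℝ) / Real.pi) * lob ((n:ℝ) * Real.pi / (2 * r)) := by
      calc Real.log (growthSum r) ≤ Real.log (((n:ℝ) + 1) * M) :=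
            Real.log_le_log hgs_pos hsum_le
        _ = Real.log ((n:ℝ) + 1) + Real.log M := by
            rw [Real.log_mul (by positivity) (Real.exp_pos _).ne']
        _ = _ := by rw [hM', Real.log_exp]
    have hfac : (0:ℝ) ≤ 2 * Real.pi / r := by positivity
    have := mul_le_mul_of_nonneg_left hlog_le hfac
    rw [upB, ← hn]
    calc (2 * Real.pi / r) * Real.log (growthSum r)
        ≤ (2 * Real.pi / r) * (Real.log ((n:ℝ) + 1)
            + 8 * ((r:ℝ) / Real.pi) * lob ((n:ℝ) * Real.pi / (2 * r))) := this
      _ = 2 * Real.pi / r * Real.log ((n:ℝ) + 1)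
            + 16 * lob ((n:ℝ) * Real.pi / (2 * r)) := by
          field_simp; ring
  -- lower bound
  have hlow : lowB r ≤ (2 * Real.pi / r) * Real.log (growthSum r) := by
    set z₀ : ℕ := n / 2 with hz₀
    have hz₀n : z₀ ≤ n := Nat.div_le_self n 2
    have hB : ∀ z : ℕ, 2 * (z + 1) ≤ r →
        lob (((z:ℝ)) * Real.pi / r + Real.pi / r) - lob (Real.pi / r)
          ≤ -(Real.pi / r) * Lsum r z := by
      intro z hzr
      have hcond : ((z:ℝ) + 1) * Real.pi / r ≤ Real.pi / 2 := by
        rw [div_le_div_iff₀ hrpos (by norm_num)]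
        have : (2:ℝ) * ((z:ℝ) + 1) ≤ r := by exact_mod_cast hzr
        nlinarith
      have h1 := sum_le_integral (by omega : 0 < r) hcond
      have hsub : (∫ t in (Real.pi / r)..(((z:ℝ) + 1) * Real.pi / r), flob t)
          = (∫ t in (0:ℝ)..(((z:ℝ) + 1) * Real.pi / r), flob t)
            - ∫ t in (0:ℝ)..(Real.pi / r), flob t := by
        refine (integral_interval_sub_left (flob_ii le_rfl (by positivity) hcond)
          (flob_ii le_rfl (by positivity) ?_)).symm
        rw [div_le_div_iff₀ hrpos (by norm_num)]
        have : (2:ℝ) ≤ r := by exact_mod_cast (by omega : 2 ≤ r)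
        nlinarith
      rw [hsub] at h1
      have harg : ((z:ℝ) + 1) * Real.pi / r = (z:ℝ) * Real.pi / r + Real.pi / r := by ring
      rw [lob_eq', lob_eq', ← harg]
      linarith
    have hc1 : 2 * (z₀ + 1) ≤ r := by omega
    have hc2 : 2 * ((n - z₀) + 1) ≤ r := by omega
    have b1 := hB z₀ hc1
    have b2 := hB (n - z₀) hc2
    -- single term lower bound for the sum
    have hsingle : ((qfactR r z₀ * qfactR r (n - z₀)) ^ 4)⁻¹ ≤ growthSum r := by
      rw [growthSum, ← hn]
      apply Finset.single_le_sum (f := fun z => ((qfactR r z * qfactR r (n - z)) ^ 4)⁻¹)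
      · intro z hzz
        exact (hterm_pos z (by rw [Finset.mem_range] at hzz; omega)).le
      · exact Finset.mem_range.mpr (by omega)
    have hlog_ge : -(4 * (Lsum r z₀ + Lsum r (n - z₀))) ≤ Real.log (growthSum r) := by
      rw [← hlog_term z₀ hz₀n]
      exact Real.log_le_log (hterm_pos z₀ hz₀n) hsingle
    have key : lob ((z₀:ℝ) * Real.pi / r + Real.pi / r)
        + lob ((((n - z₀ : ℕ)):ℝ) * Real.pi / r + Real.pi / r)
        - 2 * lob (Real.pi / r)
        ≤ -(Real.pi / r) * (Lsum r z₀ + Lsum r (n - z₀)) := by linarith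
    have hmul := mul_le_mul_of_nonneg_left key
      (by positivity : (0:ℝ) ≤ 4 * ((r:ℝ) / Real.pi))
    rw [lowB, ← hn, ← hz₀]
    calc 8 * (lob ((z₀:ℝ) * Real.pi / r + Real.pi / r)
          + lob ((((n - z₀ : ℕ)):ℝ) * Real.pi / r + Real.pi / r)
          - 2 * lob (Real.pi / r))
        = (2 * Real.pi / r) * (4 * ((r:ℝ) / Real.pi)
            * (lob ((z₀:ℝ) * Real.pi / r + Real.pi / r)
              + lob ((((n - z₀ : ℕ)):ℝ) * Real.pi / r + Real.pi / r)
              - 2 * lob (Real.pi / r))) := by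
          field_simp; ring
      _ ≤ (2 * Real.pi / r) * (4 * ((r:ℝ) / Real.pi)
            * (-(Real.pi / r) * (Lsum r z₀ + Lsum r (n - z₀)))) := by
          apply mul_le_mul_of_nonneg_left _ (by positivity : (0:ℝ) ≤ 2 * Real.pi / r)
          exact hmul
      _ = (2 * Real.pi / r) * (-(4 * (Lsum r z₀ + Lsum r (n - z₀)))) := by
          field_simp
      _ ≤ (2 * Real.pi / r) * Real.log (growthSum r) := by
          apply mul_le_mul_of_nonneg_left hlog_ge (by positivity)
  exact ⟨hlow, hup⟩

lemma pi4_mem : Real.pi / 4 ∈ Icc (0:ℝ) (Real.pi/2) := by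
  constructor <;> [positivity; linarith [Real.pi_pos]]

/-- helper: tendsto to π/4 plus small term, with lob composition -/
lemma lob_comp_pi4 {a : ℕ → ℝ} (ha : Tendsto a atTop (nhds (Real.pi/4))) :
    Tendsto (fun r => lob (a r)) atTop (nhds (lob (Real.pi/4))) := by
  have hπ := Real.pi_pos
  apply lob_tendsto pi4_mem ha
  have hmemIoo : ∀ᶠ r in atTop, a r ∈ Ioo (0:ℝ) (Real.pi/2) :=
    ha.eventually (isOpen_Ioo.eventually_mem ⟨by positivity, by linarith⟩)
  filter_upwards [hmemIoo] with r hr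
  exact ⟨hr.1.le, hr.2.le⟩

lemma T1 : Tendsto (fun r : ℕ =>
    lob ((((r-1)/2/2 : ℕ) : ℝ) * Real.pi / r + Real.pi / r)) atTop
    (nhds (lob (Real.pi/4))) := by
  have hπ := Real.pi_pos
  apply lob_comp_pi4
  have h1 : Tendsto (fun r : ℕ => (((r-1)/2/2 : ℕ) : ℝ) * Real.pi / r) atTop
      (nhds ((1/4) * Real.pi)) := by
    apply tendsto_nat_div (A := 1)
    filter_upwards [eventually_ge_atTop 1] with r hr
    have k1 : 4 * ((r-1)/2/2) ≤ r := by omega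
    have k2 : r ≤ 4 * ((r-1)/2/2) + 4 := by omega
    have c1 : 4 * ((((r-1)/2/2 : ℕ)) : ℝ) ≤ (r:ℝ) := by exact_mod_cast k1
    have c2 : (r:ℝ) ≤ 4 * ((((r-1)/2/2 : ℕ)) : ℝ) + 4 := by exact_mod_cast k2
    rw [abs_le]; constructor <;> linarith
  have h2 := h1.add (tendsto_const_div_atTop_nhds_zero_nat Real.pi)
  have : (1/4) * Real.pi + 0 = Real.pi / 4 := by ring
  rwa [this] at h2

lemma T2 : Tendsto (fun r : ℕ =>
    lob ((((r-1)/2 - (r-1)/2/2 : ℕ) : ℝ) * Real.pi / r + Real.pi / r)) atTop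
    (nhds (lob (Real.pi/4))) := by
  have hπ := Real.pi_pos
  apply lob_comp_pi4
  have h1 : Tendsto (fun r : ℕ => (((r-1)/2 - (r-1)/2/2 : ℕ) : ℝ) * Real.pi / r) atTop
      (nhds ((1/4) * Real.pi)) := by
    apply tendsto_nat_div (A := 1)
    filter_upwards [eventually_ge_atTop 1] with r hr
    have k1 : 4 * ((r-1)/2 - (r-1)/2/2) ≤ r + 2 := by omega
    have k2 : r ≤ 4 * ((r-1)/2 - (r-1)/2/2) + 4 := by omega
    have c1 : 4 * ((((r-1)/2 - (r-1)/2/2 : ℕ)) : ℝ) ≤ (r:ℝ) + 2 := by exact_mod_cast k1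
    have c2 : (r:ℝ) ≤ 4 * ((((r-1)/2 - (r-1)/2/2 : ℕ)) : ℝ) + 4 := by exact_mod_cast k2
    rw [abs_le]; constructor <;> linarith
  have h2 := h1.add (tendsto_const_div_atTop_nhds_zero_nat Real.pi)
  have : (1/4) * Real.pi + 0 = Real.pi / 4 := by ring
  rwa [this] at h2

lemma T3 : Tendsto (fun r : ℕ => lob (Real.pi / r)) atTop (nhds 0) := by
  have hπ := Real.pi_pos
  rw [← lob_zero]
  apply lob_tendsto ⟨le_refl 0, by positivity⟩
  · exact tendsto_const_div_atTop_nhds_zero_nat Real.pi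
  · filter_upwards [eventually_ge_atTop 2] with r hr
    have hr2 : (2:ℝ) ≤ r := by exact_mod_cast hr
    constructor
    · positivity
    · rw [div_le_div_iff₀ (by linarith) (by norm_num)]; nlinarith

lemma T4 : Tendsto (fun r : ℕ =>
    lob ((((r-1)/2 : ℕ) : ℝ) * Real.pi / (2 * r))) atTop (nhds (lob (Real.pi/4))) := by
  have hπ := Real.pi_pos
  apply lob_comp_pi4
  have heq : ∀ r : ℕ, (((r-1)/2 : ℕ) : ℝ) * Real.pi / (2 * (r:ℝ))
      = (((r-1)/2 : ℕ) : ℝ) * (Real.pi / 2) / r := by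
    intro r
    ring
  have h1 : Tendsto (fun r : ℕ => (((r-1)/2 : ℕ) : ℝ) * (Real.pi/2) / r) atTop
      (nhds ((1/2) * (Real.pi/2))) := by
    apply tendsto_nat_div (A := 1)
    filter_upwards [eventually_ge_atTop 1] with r hr
    have k1 : 2 * ((r-1)/2) ≤ r := by omega
    have k2 : r ≤ 2 * ((r-1)/2) + 2 := by omega
    have c1 : 2 * ((((r-1)/2 : ℕ)) : ℝ) ≤ (r:ℝ) := by exact_mod_cast k1
    have c2 : (r:ℝ) ≤ 2 * ((((r-1)/2 : ℕ)) : ℝ) + 2 := by exact_mod_cast k2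
    rw [abs_le]; constructor <;> linarith
  have : (1/2) * (Real.pi/2) = Real.pi / 4 := by ring
  rw [this] at h1
  apply h1.congr
  intro r
  rw [heq]

lemma T5 : Tendsto (fun r : ℕ =>
    2 * Real.pi / r * Real.log ((((r-1)/2 : ℕ) : ℝ) + 1)) atTop (nhds 0) := by
  have hπ := Real.pi_pos
  have hlog : Tendsto (fun r : ℕ => Real.log r / r) atTop (nhds 0) :=
    (Real.isLittleO_log_id_atTop.tendsto_div_nhds_zero).comp tendsto_natCast_atTop_atTop
  have hup : Tendsto (fun r : ℕ => 2 * Real.pi * (Real.log r / r)) atTop (nhds 0) := by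
    simpa using hlog.const_mul (2 * Real.pi)
  apply tendsto_of_tendsto_of_tendsto_of_le_of_le' tendsto_const_nhds hup
  · filter_upwards [eventually_ge_atTop 1] with r hr
    have h1 : (1:ℝ) ≤ (((r-1)/2 : ℕ) : ℝ) + 1 := by
      have : (0:ℝ) ≤ (((r-1)/2 : ℕ) : ℝ) := Nat.cast_nonneg _
      linarith
    have h2 : (0:ℝ) ≤ Real.log ((((r-1)/2 : ℕ) : ℝ) + 1) := Real.log_nonneg h1
    have hrp : (0:ℝ) < r := by exact_mod_cast hr
    positivity
  · filter_upwards [eventually_ge_atTop 1] with r hr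
    have hrp : (0:ℝ) < r := by exact_mod_cast hr
    have hle : (((r-1)/2 : ℕ) : ℝ) + 1 ≤ (r:ℝ) := by
      have : (r-1)/2 + 1 ≤ r := by omega
      exact_mod_cast this
    have h2 : Real.log ((((r-1)/2 : ℕ) : ℝ) + 1) ≤ Real.log r :=
      Real.log_le_log (by positivity) hle
    have h3 : (0:ℝ) ≤ Real.log ((((r-1)/2 : ℕ) : ℝ) + 1) := by
      apply Real.log_nonneg
      have : (0:ℝ) ≤ (((r-1)/2 : ℕ) : ℝ) := Nat.cast_nonneg _
      linarith
    calc 2 * Real.pi / (r:ℝ) * Real.log ((((r-1)/2 : ℕ) : ℝ) + 1)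
        ≤ 2 * Real.pi / (r:ℝ) * Real.log r := by
          apply mul_le_mul_of_nonneg_left h2 (by positivity)
      _ = 2 * Real.pi * (Real.log r / r) := by ring
end Aux

/-- `lim_{r→∞, r odd} (2π/r) log Σ_z ({z}!{(r-1)/2-z}!)^{-4} = 16 Λ(π/4)`. -/
theorem stmt11 :
    Tendsto (fun r : ℕ => (2 * Real.pi / r) * Real.log (growthSum r))
      (atTop ⊓ 𝓟 {r : ℕ | Odd r}) (nhds (16 * lob (Real.pi / 4))) := by
  have hlowT : Tendsto lowB atTop (nhds (16 * lob (Real.pi/4))) := by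
    have := ((T1.add T2).sub (T3.const_mul 2)).const_mul 8
    have heq : (8:ℝ) * (lob (Real.pi/4) + lob (Real.pi/4) - 2 * 0)
        = 16 * lob (Real.pi/4) := by ring
    rw [heq] at this
    exact this.congr (fun r => by rw [lowB])
  have hupT : Tendsto upB atTop (nhds (16 * lob (Real.pi/4))) := by
    have := T5.add (T4.const_mul 16)
    have heq : (0:ℝ) + 16 * lob (Real.pi/4) = 16 * lob (Real.pi/4) := by ring
    rw [heq] at this
    exact this.congr (fun r => by rw [upB])
  have hev : ∀ᶠ r : ℕ in atTop ⊓ 𝓟 {r : ℕ | Odd r}, Odd r ∧ 5 ≤ r := by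
    have e1 : ∀ᶠ r : ℕ in atTop ⊓ 𝓟 {r : ℕ | Odd r}, 5 ≤ r :=
      (eventually_ge_atTop 5).filter_mono inf_le_left
    have e2 : ∀ᶠ r : ℕ in atTop ⊓ 𝓟 {r : ℕ | Odd r}, Odd r := by
      apply Eventually.filter_mono inf_le_right
      rw [eventually_principal]
      exact fun r hr => hr
    filter_upwards [e1, e2] with r h1 h2
    exact ⟨h2, h1⟩
  apply tendsto_of_tendsto_of_tendsto_of_le_of_le'
    (hlowT.mono_left inf_le_left) (hupT.mono_left inf_le_left)
  · filter_upwards [hev] with r hr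
    exact (main_bounds hr.1 hr.2).1
  · filter_upwards [hev] with r hr
    exact (main_bounds hr.1 hr.2).2
end
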